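/- In the independent-set reduction graph G', removing any vertex of V'' from a seed set S' changes the influence difference δ by at most 1, and in fact δ(S' \ {v''}) ≥ δ(S') − 1 for all v'' ∈ V''; moreover if v'' ∈ reach_{E'}(S' \ {v''}) then δ(S' \ {v''}) ≥ δ(S'). -/

import Mathlib

/-- Vertices reachable from `S` via directed edges given by relation `E`. -/
def reach {V : Type*} (E : V → V → Prop) (S : Set V) : Set V :=
  {v | ∃ s ∈ S, Relation.ReflTransGen E s v}

/-- Edges E' of the reduction graph: (v'_i, v''_j) whenever {v_i, v_j} is an edge of G.
`Sum.inl` is the copy V', `Sum.inr` the copy V''. -/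
def E1 {V : Type*} (Adj : V → V → Prop) : (V ⊕ V) → (V ⊕ V) → Prop :=
  fun a b => ∃ i j, Adj i j ∧ a = Sum.inl i ∧ b = Sum.inr j

/-- Edges E'' of the reduction graph: (v'_i, v''_i) for every vertex v_i of G. -/
def E2 {V : Type*} : (V ⊕ V) → (V ⊕ V) → Prop :=
  fun a b => ∃ i, a = Sum.inl i ∧ b = Sum.inr i

/-- Influence difference δ(S) = |reach_{E'∪E''}(S)| − |reach_{E'}(S)|. -/
noncomputable def delta {V : Type*} [Fintype V] (Adj : V → V → Prop) (S : Set (V ⊕ V)) : ℤ :=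
  ((reach (fun a b => E1 Adj a b ∨ E2 a b) S).ncard : ℤ) - ((reach (E1 Adj) S).ncard : ℤ)

lemma reach_union_singleton {V : Type*} (E : V → V → Prop) (S : Set V) (x : V)
    (hx : ∀ y, ¬ E x y) : reach E (S ∪ {x}) = reach E S ∪ {x} := by
  ext w
  constructor
  · rintro ⟨s, hs | hs, hw⟩
    · exact Or.inl ⟨s, hs, hw⟩
    · rcases hs with rfl
      rcases Relation.ReflTransGen.cases_head hw with h | ⟨c, hc, _⟩
      · exact Or.inr (by simp [h.symm])
      · exact absurd hc (hx c)
  · rintro (⟨s, hs, hw⟩ | hw)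
    · exact ⟨s, Or.inl hs, hw⟩
    · rcases hw with rfl
      exact ⟨w, Or.inr rfl, .refl⟩

theorem delta_remove_inr {V : Type*} [Fintype V] (Adj : V → V → Prop)
    (hsym : ∀ i j, Adj i j → Adj j i) (S' : Set (V ⊕ V)) (v : V) :
    |delta Adj (S' \ {Sum.inr v}) - delta Adj S'| ≤ 1 ∧
      delta Adj S' - 1 ≤ delta Adj (S' \ {Sum.inr v}) ∧
      (Sum.inr v ∈ reach (E1 Adj) (S' \ {Sum.inr v}) →
        delta Adj S' ≤ delta Adj (S' \ {Sum.inr v})) := by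
  classical
  by_cases hv : Sum.inr v ∈ S'
  · set T := S' \ {Sum.inr v} with hT
    have hS : S' = T ∪ {Sum.inr v} := by
      rw [hT, Set.diff_union_self]
      simp [hv]
    have hx1 : ∀ y, ¬ (E1 Adj) (Sum.inr v) y := by
      rintro y ⟨i, j, _, h, _⟩; simp at h
    have hx2 : ∀ y, ¬ (fun a b => E1 Adj a b ∨ E2 a b) (Sum.inr v) y := by
      rintro y (h | ⟨i, h, _⟩)
      · exact hx1 y h
      · simp at h
    have r1 : reach (E1 Adj) S' = insert (Sum.inr v) (reach (E1 Adj) T) := by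
      rw [hS, reach_union_singleton _ _ _ hx1, Set.union_singleton]
    have r2 : reach (fun a b => E1 Adj a b ∨ E2 a b) S'
        = insert (Sum.inr v) (reach (fun a b => E1 Adj a b ∨ E2 a b) T) := by
      rw [hS, reach_union_singleton _ _ _ hx2, Set.union_singleton]
    set A := reach (fun a b => E1 Adj a b ∨ E2 a b) T with hA'
    set B := reach (E1 Adj) T with hB'
    have hBA : B ⊆ A := by
      rintro w ⟨s, hs, hws⟩
      exact ⟨s, hs, Relation.ReflTransGen.mono (fun a b h => Or.inl h) s w hws⟩
    have hAfin : A.Finite := Set.toFinite _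
    have hBfin : B.Finite := Set.toFinite _
    have key : delta Adj T - delta Adj S' = 0 ∨ delta Adj T - delta Adj S' = 1 := by
      unfold delta
      rw [r1, r2, ← hA', ← hB']
      by_cases hA : Sum.inr v ∈ A
      · rw [Set.ncard_insert_of_mem hA]
        by_cases hB : Sum.inr v ∈ B
        · rw [Set.ncard_insert_of_mem hB]; left; ring
        · rw [Set.ncard_insert_of_notMem hB hBfin]; right; push_cast; ring
      · have hB : Sum.inr v ∉ B := fun h => hA (hBA h)
        rw [Set.ncard_insert_of_notMem hA hAfin, Set.ncard_insert_of_notMem hB hBfin]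
        left; push_cast; ring
    have hge : delta Adj S' ≤ delta Adj T := by rcases key with h | h <;> omega
    have hle : delta Adj T ≤ delta Adj S' + 1 := by rcases key with h | h <;> omega
    exact ⟨by rw [abs_le]; constructor <;> omega, by omega, fun _ => hge⟩
  · have h : S' \ {Sum.inr v} = S' := by simp [hv]
    rw [h]
    simp
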